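/- For all a, b > 0 with a ≠ b, (2/π)·C(a,b) + (1 - 2/π)·H(a,b) < T(a,b) < (2/3)·C(a,b) + (1/3)·H(a,b), and the constants 2/π and 2/3 are best possible. -/

import Mathlib

open Real

noncomputable def Amean (a b : ℝ) : ℝ := (a + b) / 2
noncomputable def Gmean (a b : ℝ) : ℝ := Real.sqrt (a * b)
noncomputable def Hmean (a b : ℝ) : ℝ := 2 * a * b / (a + b)
noncomputable def Cmean (a b : ℝ) : ℝ := (a ^ 2 + b ^ 2) / (a + b)
noncomputable def Cbar (a b : ℝ) : ℝ := 2 * (a ^ 2 + a * b + b ^ 2) / (3 * (a + b))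
noncomputable def Smean (a b : ℝ) : ℝ := Real.sqrt ((a ^ 2 + b ^ 2) / 2)
noncomputable def Pmean (a b : ℝ) : ℝ := (a - b) / (2 * Real.arcsin ((a - b) / (a + b)))
noncomputable def Tmean (a b : ℝ) : ℝ := (a - b) / (2 * Real.arctan ((a - b) / (a + b)))

namespace SharpAux15

open Set

lemma arctan_pos' {t : ℝ} (ht : 0 < t) : 0 < arctan t := by
  simpa using Real.arctan_strictMono ht

lemma arctan_ne' {t : ℝ} (ht : t ≠ 0) : arctan t ≠ 0 := by
  intro h
  exact ht (Real.arctan_injective (by simpa using h))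

lemma arctan_gt_lower {t : ℝ} (ht : 0 < t) : 3 * t / (3 + t ^ 2) < arctan t := by
  set f : ℝ → ℝ := fun x => arctan x - 3 * x / (3 + x ^ 2) with hf
  have hd : ∀ x : ℝ, HasDerivAt f (1 / (1 + x ^ 2) - (3 * (3 + x ^ 2) - 3 * x * (2 * x)) / (3 + x ^ 2) ^ 2) x := by
    intro x
    have h1 : HasDerivAt (fun x : ℝ => 3 * x) 3 x := by
      simpa using (hasDerivAt_id x).const_mul 3
    have h2 : HasDerivAt (fun x : ℝ => 3 + x ^ 2) (2 * x) x := by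
      simpa using ((hasDerivAt_pow 2 x).const_add 3)
    have h3 : (3 + x ^ 2) ≠ 0 := by positivity
    exact (Real.hasDerivAt_arctan x).sub (h1.div h2 h3)
  have hmono : StrictMonoOn f (Ici 0) := by
    apply strictMonoOn_of_deriv_pos (convex_Ici 0)
    · exact fun x _ => ((hd x).continuousAt).continuousWithinAt
    · intro x hx
      rw [interior_Ici] at hx
      rw [(hd x).deriv]
      rw [sub_pos, div_lt_div_iff₀ (by positivity) (by positivity)]
      nlinarith [sq_nonneg x, pow_pos (show (0:ℝ) < x from hx) 4, sq_nonneg (x^2)]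
  have h0 : f 0 = 0 := by simp [hf]
  have := hmono (Set.self_mem_Ici) (le_of_lt ht : t ∈ Ici 0) ht
  rw [h0] at this
  simpa [hf, sub_pos] using this

lemma arctan_le_upper {t : ℝ} (ht : 0 ≤ t) : arctan t ≤ t - t ^ 3 / 3 + t ^ 5 / 5 := by
  set f : ℝ → ℝ := fun x => x - x ^ 3 / 3 + x ^ 5 / 5 - arctan x with hf
  have hd : ∀ x : ℝ, HasDerivAt f (1 - 3 * x ^ 2 / 3 + 5 * x ^ 4 / 5 - 1 / (1 + x ^ 2)) x := by
    intro x
    have h1 : HasDerivAt (fun x : ℝ => x - x ^ 3 / 3 + x ^ 5 / 5)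
        (1 - 3 * x ^ 2 / 3 + 5 * x ^ 4 / 5) x := by
      have := ((hasDerivAt_id x).sub ((hasDerivAt_pow 3 x).div_const 3)).add
        ((hasDerivAt_pow 5 x).div_const 5)
      convert this using 1 <;> push_cast <;> rfl
    exact h1.sub (Real.hasDerivAt_arctan x)
  have hmono : MonotoneOn f (Ici 0) := by
    apply monotoneOn_of_deriv_nonneg (convex_Ici 0)
    · exact fun x _ => ((hd x).continuousAt).continuousWithinAt
    · exact fun x _ => ((hd x).differentiableAt).differentiableWithinAt
    · intro x hx
      rw [(hd x).deriv]
      rw [sub_nonneg, div_le_iff₀ (by positivity)]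
      nlinarith [sq_nonneg x, sq_nonneg (x^2), sq_nonneg (x^3), pow_two_nonneg (x^3)]
  have h0 : f 0 = 0 := by simp [hf]
  have := hmono (Set.self_mem_Ici) (ht : t ∈ Ici 0) ht
  rw [h0] at this
  simpa [hf, sub_nonneg] using this

lemma key1_gen {c : ℝ} (hclb : (27/100:ℝ) < c) (hcub : c < (28/100:ℝ))
    (hc4 : 1 + c = 4 / π) {t : ℝ} (ht0 : 0 < t) (ht1 : t < 1) :
    (1 + c * t ^ 2) * arctan t < t := by
  have hcpos : 0 < c := by linarith
  have h3c : 3 * c < 1 := by linarith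
  set T2 : ℝ := (1 - 3 * c) / (c * (1 + c)) with hT2
  have hccpos : 0 < c * (1 + c) := by nlinarith
  have hT2pos : 0 < T2 := div_pos (by linarith) hccpos
  have hT2lt1 : T2 < 1 := by
    rw [hT2, div_lt_one hccpos]; nlinarith
  set t0 : ℝ := Real.sqrt T2 with ht0def
  have ht0sq : t0 ^ 2 = T2 := Real.sq_sqrt hT2pos.le
  have ht0pos : 0 < t0 := Real.sqrt_pos.2 hT2pos
  have ht0lt1 : t0 < 1 := by
    rw [ht0def, show (1:ℝ) = Real.sqrt 1 by simp]
    exact Real.sqrt_lt_sqrt hT2pos.le hT2lt1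
  set g : ℝ → ℝ := fun x => x / (1 + c * x ^ 2) - arctan x with hg
  have hdenom : ∀ x : ℝ, (0:ℝ) < 1 + c * x ^ 2 := fun x => by positivity
  have hd : ∀ x : ℝ, HasDerivAt g
      ((1 * (1 + c * x ^ 2) - x * (c * (2 * x))) / (1 + c * x ^ 2) ^ 2 - 1 / (1 + x ^ 2)) x := by
    intro x
    have h2 : HasDerivAt (fun x : ℝ => 1 + c * x ^ 2) (c * (2 * x)) x := by
      simpa using (((hasDerivAt_pow 2 x).const_mul c).const_add 1)
    exact ((hasDerivAt_id x).div h2 (hdenom x).ne').sub (Real.hasDerivAt_arctan x)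
  have hsign : ∀ x : ℝ, ((1 * (1 + c * x ^ 2) - x * (c * (2 * x))) / (1 + c * x ^ 2) ^ 2
      - 1 / (1 + x ^ 2)) = (x ^ 2 * ((1 - 3 * c) - c * (1 + c) * x ^ 2)) /
        ((1 + c * x ^ 2) ^ 2 * (1 + x ^ 2)) := by
    intro x
    have := hdenom x
    field_simp
    ring
  have hmono : StrictMonoOn g (Icc 0 t0) := by
    apply strictMonoOn_of_deriv_pos (convex_Icc 0 t0)
    · exact fun x _ => ((hd x).continuousAt).continuousWithinAt
    · intro x hx
      rw [interior_Icc] at hx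
      rw [(hd x).deriv, hsign x]
      have hx2 : x ^ 2 < T2 := by
        rw [← ht0sq]; exact pow_lt_pow_left₀ hx.2 hx.1.le two_ne_zero
      have : c * (1 + c) * x ^ 2 < 1 - 3 * c := by
        rw [hT2, lt_div_iff₀ hccpos] at hx2; nlinarith
      exact div_pos (mul_pos (pow_pos hx.1 2) (by linarith)) (by positivity)
  have hanti : StrictAntiOn g (Icc t0 1) := by
    apply strictAntiOn_of_deriv_neg (convex_Icc t0 1)
    · exact fun x _ => ((hd x).continuousAt).continuousWithinAt
    · intro x hx
      rw [interior_Icc] at hx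
      rw [(hd x).deriv, hsign x]
      have hx2 : T2 < x ^ 2 := by
        rw [← ht0sq]; exact pow_lt_pow_left₀ hx.1 ht0pos.le two_ne_zero
      have : 1 - 3 * c < c * (1 + c) * x ^ 2 := by
        rw [hT2, div_lt_iff₀ hccpos] at hx2; nlinarith
      have hxpos : 0 < x := lt_trans ht0pos hx.1
      exact div_neg_of_neg_of_pos (mul_neg_of_pos_of_neg (pow_pos hxpos 2) (by linarith)) (by positivity)
  have hg0 : g 0 = 0 := by simp [hg]
  have hg1 : g 1 = 0 := by
    have h1 : (1:ℝ) + c * 1 ^ 2 = 4 / π := by rw [← hc4]; ring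
    rw [hg]; simp only [Real.arctan_one, h1]
    rw [one_div_div]; ring
  have hgt : 0 < g t := by
    rcases le_or_gt t t0 with h | h
    · have := hmono (Set.left_mem_Icc.2 ht0pos.le) (Set.mem_Icc.2 ⟨ht0.le, h⟩) ht0
      rwa [hg0] at this
    · have := hanti (Set.mem_Icc.2 ⟨h.le, ht1.le⟩) (Set.right_mem_Icc.2 ht0lt1.le) ht1
      rwa [hg1] at this
  have harc : arctan t < t / (1 + c * t ^ 2) := by
    rw [hg] at hgt; simpa [sub_pos] using hgt
  calc (1 + c * t ^ 2) * arctan t < (1 + c * t ^ 2) * (t / (1 + c * t ^ 2)) :=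
        mul_lt_mul_of_pos_left harc (hdenom t)
    _ = t := by field_simp

lemma key1 {t : ℝ} (ht0 : 0 < t) (ht1 : t < 1) :
    (1 + (4 / π - 1) * t ^ 2) * arctan t < t := by
  have hpi3 : (3.141592 : ℝ) < π := Real.pi_gt_d6
  have hpi4 : π < 3.141593 := Real.pi_lt_d6
  have hpipos : (0:ℝ) < π := Real.pi_pos
  refine key1_gen ?_ ?_ (by ring) ht0 ht1
  · rw [lt_sub_iff_add_lt, lt_div_iff₀ hpipos]; nlinarith
  · rw [sub_lt_iff_lt_add, div_lt_iff₀ hpipos]; nlinarith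

lemma red1 {t : ℝ} (h0 : t ≠ 0) (h1 : |t| < 1) :
    1 + (4 / π - 1) * t ^ 2 < t / arctan t := by
  rw [abs_lt] at h1
  rcases h0.lt_or_gt with hn | hp
  · have hs0 : 0 < -t := by linarith
    have hs1 : -t < 1 := by linarith [h1.1]
    have hk := key1 hs0 hs1
    have harc : 0 < arctan (-t) := arctan_pos' hs0
    have : 1 + (4 / π - 1) * (-t) ^ 2 < (-t) / arctan (-t) := by
      rw [lt_div_iff₀ harc]; linarith
    rw [Real.arctan_neg, neg_div_neg_eq] at this
    simpa using this
  · have hk := key1 hp h1.2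
    have harc : 0 < arctan t := arctan_pos' hp
    rw [lt_div_iff₀ harc]; linarith

lemma red2 {t : ℝ} (h0 : t ≠ 0) :
    t / arctan t < 1 + t ^ 2 / 3 := by
  have main : ∀ s : ℝ, 0 < s → s / arctan s < 1 + s ^ 2 / 3 := by
    intro s hs
    have h1 := arctan_gt_lower hs
    have h2 : 0 < 3 * s / (3 + s ^ 2) := by positivity
    have harc : 0 < arctan s := lt_trans h2 h1
    rw [div_lt_iff₀ harc]
    calc s = (3 * s / (3 + s ^ 2)) * (1 + s ^ 2 / 3) := by field_simp <;> ring
      _ < arctan s * (1 + s ^ 2 / 3) := by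
          apply mul_lt_mul_of_pos_right h1 (by positivity)
      _ = (1 + s ^ 2 / 3) * arctan s := by ring
  rcases h0.lt_or_gt with hn | hp
  · have := main (-t) (by linarith)
    rw [Real.arctan_neg, neg_div_neg_eq] at this
    simpa using this
  · exact main t hp

lemma means_param {a b : ℝ} (ha : 0 < a) (hb : 0 < b) (hab : a ≠ b) :
    Cmean a b = (a + b) / 2 * (1 + ((a - b) / (a + b)) ^ 2) ∧
    Hmean a b = (a + b) / 2 * (1 - ((a - b) / (a + b)) ^ 2) ∧
    Tmean a b = (a + b) / 2 * (((a - b) / (a + b)) / arctan ((a - b) / (a + b))) := by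
  have hs : (0:ℝ) < a + b := by linarith
  have htne : (a - b) / (a + b) ≠ 0 := div_ne_zero (sub_ne_zero.2 hab) hs.ne'
  have harc := arctan_ne' htne
  refine ⟨?_, ?_, ?_⟩
  · unfold Cmean; field_simp <;> ring
  · unfold Hmean; field_simp <;> ring
  · unfold Tmean; field_simp <;> ring

lemma tbounds {a b : ℝ} (ha : 0 < a) (hb : 0 < b) (hab : a ≠ b) :
    (a - b) / (a + b) ≠ 0 ∧ |(a - b) / (a + b)| < 1 := by
  have hs : (0:ℝ) < a + b := by linarith
  constructor
  · exact div_ne_zero (sub_ne_zero.2 hab) hs.ne'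
  · rw [abs_div, abs_of_pos hs, div_lt_one hs, abs_lt]
    constructor <;> linarith

lemma pair_ineq {a b : ℝ} (ha : 0 < a) (hb : 0 < b) (hab : a ≠ b) :
    (2 / π) * Cmean a b + (1 - (2 / π)) * Hmean a b < Tmean a b ∧
    Tmean a b < (2 / 3) * Cmean a b + (1 - (2 / 3)) * Hmean a b := by
  obtain ⟨hC, hH, hT⟩ := means_param ha hb hab
  obtain ⟨ht0, ht1⟩ := tbounds ha hb hab
  set t : ℝ := (a - b) / (a + b) with htdef
  have hs : (0:ℝ) < (a + b) / 2 := by linarith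
  have r1 := red1 ht0 ht1
  have r2 := red2 ht0
  constructor
  · rw [hC, hH, hT]
    have hmul := mul_lt_mul_of_pos_left r1 hs
    have heq : (2 / π) * ((a + b) / 2 * (1 + t ^ 2)) + (1 - (2 / π)) * ((a + b) / 2 * (1 - t ^ 2))
        = (a + b) / 2 * (1 + (4 / π - 1) * t ^ 2) := by ring
    rw [heq]; exact hmul
  · rw [hC, hH, hT]
    have hmul := mul_lt_mul_of_pos_left r2 hs
    have heq : (2 / 3) * ((a + b) / 2 * (1 + t ^ 2)) + (1 - (2 / 3)) * ((a + b) / 2 * (1 - t ^ 2))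
        = (a + b) / 2 * (1 + t ^ 2 / 3) := by ring
    rw [heq]; exact hmul

lemma means_special {t : ℝ} :
    Cmean (1 + t) (1 - t) = 1 + t ^ 2 ∧ Hmean (1 + t) (1 - t) = 1 - t ^ 2 ∧
    Tmean (1 + t) (1 - t) = t / arctan t := by
  refine ⟨?_, ?_, ?_⟩
  · unfold Cmean; rw [show (1+t)^2 + (1-t)^2 = 2*(1+t^2) by ring, show (1+t) + (1-t) = 2 by ring]
    ring
  · unfold Hmean; rw [show 2*(1+t)*(1-t) = 2*(1-t^2) by ring, show (1+t) + (1-t) = 2 by ring]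
    ring
  · unfold Tmean
    rw [show (1+t) - (1-t) = 2*t by ring, show (1+t) + (1-t) = 2 by ring,
      show 2*t/2 = t by ring]
    rw [mul_comm 2 (arctan t), ← div_div, mul_div_assoc]
    norm_num

lemma CH_diff {a b : ℝ} (ha : 0 < a) (hb : 0 < b) (hab : a ≠ b) :
    Hmean a b < Cmean a b := by
  have hs : (0:ℝ) < a + b := by linarith
  have : Cmean a b - Hmean a b = (a - b) ^ 2 / (a + b) := by
    unfold Cmean Hmean; field_simp <;> ring
  have hpos : 0 < (a - b) ^ 2 / (a + b) := by
    apply div_pos _ hs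
    exact pow_pos (abs_pos.mpr (sub_ne_zero.2 hab)) 2 |>.trans_le (by rw [sq_abs])
  linarith

end SharpAux15

theorem sharp_stmt_15 :
    (∀ a b : ℝ, 0 < a → 0 < b → a ≠ b →
        (2 / Real.pi) * Cmean a b + (1 - (2 / Real.pi)) * Hmean a b < Tmean a b ∧
        Tmean a b < (2 / 3) * Cmean a b + (1 - (2 / 3)) * Hmean a b) ∧
    (∀ α : ℝ, (∀ a b : ℝ, 0 < a → 0 < b → a ≠ b →
        α * Cmean a b + (1 - α) * Hmean a b < Tmean a b) ↔ α ≤ (2 / Real.pi)) ∧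
    (∀ β : ℝ, (∀ a b : ℝ, 0 < a → 0 < b → a ≠ b →
        Tmean a b < β * Cmean a b + (1 - β) * Hmean a b) ↔ β ≥ (2 / 3)) := by
  refine ⟨fun a b ha hb hab => SharpAux15.pair_ineq ha hb hab, ?_, ?_⟩
  · intro α
    constructor
    · intro h
      by_contra hα
      push_neg at hα
      have hπ : (0:ℝ) < π := Real.pi_pos
      have hcont : ContinuousAt (fun t : ℝ => 1 + (2*α - 1)*t^2 - t / arctan t) 1 := by
        apply ContinuousAt.sub
        · exact continuousAt_const.add (continuousAt_const.mul ((continuous_pow 2).continuousAt))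
        · exact ContinuousAt.div continuousAt_id Real.continuous_arctan.continuousAt
            (by rw [Real.arctan_one]; positivity)
      have hf1 : (0:ℝ) < 1 + (2*α - 1)*1^2 - 1 / arctan 1 := by
        rw [Real.arctan_one, one_div_div]
        have h4 : (4:ℝ)/π = 2*(2/π) := by ring
        rw [h4]; linarith
      have hev : ∀ᶠ t in nhdsWithin 1 (Set.Iio 1),
          (0:ℝ) < 1 + (2*α - 1)*t^2 - t / arctan t :=
        (hcont.eventually (eventually_gt_nhds hf1)).filter_mono nhdsWithin_le_nhds
      have hmem : Set.Ioo (0:ℝ) 1 ∈ nhdsWithin 1 (Set.Iio 1) :=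
        Ioo_mem_nhdsLT_of_mem (by constructor <;> norm_num)
      obtain ⟨t, hft, ht⟩ := (hev.and (Filter.eventually_of_mem hmem fun x hx => hx)).exists
      have h1t : (0:ℝ) < 1 + t := by linarith [ht.1]
      have h2t : (0:ℝ) < 1 - t := by linarith [ht.2]
      have hne : (1:ℝ) + t ≠ 1 - t := by
        intro he
        have : t = 0 := by linarith
        exact absurd ht.1 (by rw [this]; exact lt_irrefl 0)
      have happ := h (1+t) (1-t) h1t h2t hne
      obtain ⟨hC, hH, hT⟩ := SharpAux15.means_special (t := t)
      rw [hC, hH, hT] at happ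
      have heq : α*(1+t^2) + (1-α)*(1-t^2) = 1 + (2*α-1)*t^2 := by ring
      linarith [happ, hft]
    · intro hα a b ha hb hab
      obtain ⟨h1, _⟩ := SharpAux15.pair_ineq ha hb hab
      have hCH := SharpAux15.CH_diff ha hb hab
      nlinarith [mul_nonneg (sub_nonneg.2 hα) (sub_pos.2 hCH).le]
  · intro β
    constructor
    · intro h
      by_contra hβ
      push_neg at hβ
      obtain ⟨δ, hδdef⟩ : ∃ δ : ℝ, δ = 2*β - 1 := ⟨_, rfl⟩
      have hδ : δ < 1/3 := by rw [hδdef]; linarith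
      obtain ⟨d, hddef⟩ : ∃ d : ℝ, d = |δ| := ⟨_, rfl⟩
      have hd0 : 0 ≤ d := hddef ▸ abs_nonneg δ
      have hdδ : δ ≤ d := hddef ▸ le_abs_self δ
      have hdδ2 : -δ ≤ d := hddef ▸ neg_le_abs δ
      have h1d : (0:ℝ) < 1 + d := by linarith
      obtain ⟨t, htdef⟩ : ∃ t : ℝ, t = min (1/2) ((1/3 - δ)/(1+d)) := ⟨_, rfl⟩
      have htpos : 0 < t := by
        rw [htdef]
        exact lt_min (by norm_num) (div_pos (by linarith) h1d)
      have ht12 : t ≤ 1/2 := htdef ▸ min_le_left _ _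
      have htd : t ≤ (1/3 - δ)/(1+d) := htdef ▸ min_le_right _ _
      have htsq : t^2*(1+d) ≤ 1/3 - δ := by
        have h1 : t*(1+d) ≤ 1/3 - δ := by
          rw [← le_div_iff₀ h1d]; exact htd
        nlinarith
      have harcpos : 0 < arctan t := SharpAux15.arctan_pos' htpos
      have hup := SharpAux15.arctan_le_upper htpos.le
      have hkey : (1 + δ*t^2) * arctan t ≤ t := by
        rcases le_or_gt (1 + δ*t^2) 0 with hc | hc
        · calc (1+δ*t^2)*arctan t ≤ 0 := mul_nonpos_of_nonpos_of_nonneg hc harcpos.le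
            _ ≤ t := htpos.le
        · have step : (1+δ*t^2)*arctan t ≤ (1+δ*t^2)*(t - t^3/3 + t^5/5) :=
            mul_le_mul_of_nonneg_left hup hc.le
          have h4 : t^2 ≤ 1/4 := by nlinarith
          have hfin : (1+δ*t^2)*(t - t^3/3 + t^5/5) ≤ t := by
            nlinarith [mul_le_mul_of_nonneg_right htsq (pow_nonneg htpos.le 3),
              mul_le_mul_of_nonneg_right hdδ2 (pow_nonneg htpos.le 5),
              mul_le_mul_of_nonneg_right hdδ (pow_nonneg htpos.le 5),
              mul_le_mul_of_nonneg_right hdδ2 (pow_nonneg htpos.le 7),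
              mul_le_mul_of_nonneg_right hdδ (pow_nonneg htpos.le 7),
              mul_le_mul_of_nonneg_right h4 (pow_nonneg htpos.le 5),
              mul_nonneg hd0 (pow_nonneg htpos.le 5),
              mul_le_mul_of_nonneg_left (mul_le_mul_of_nonneg_right h4 (pow_nonneg htpos.le 5)) hd0,
              pow_pos htpos 3, pow_pos htpos 5, pow_pos htpos 7]
          linarith
      have hge : 1 + δ*t^2 ≤ t / arctan t := (le_div_iff₀ harcpos).2 hkey
      have h1t : (0:ℝ) < 1 + t := by linarith
      have h2t : (0:ℝ) < 1 - t := by linarith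
      have hne : (1:ℝ) + t ≠ 1 - t := by
        intro he
        have : t = 0 := by linarith
        exact absurd htpos (by rw [this]; exact lt_irrefl 0)
      have happ := h (1+t) (1-t) h1t h2t hne
      obtain ⟨hC, hH, hT⟩ := SharpAux15.means_special (t := t)
      rw [hC, hH, hT] at happ
      have heq : β*(1+t^2) + (1-β)*(1-t^2) = 1 + δ*t^2 := by rw [hδdef]; ring
      linarith [happ, hge]
    · intro hβ a b ha hb hab
      obtain ⟨_, h2⟩ := SharpAux15.pair_ineq ha hb hab
      have hCH := SharpAux15.CH_diff ha hb hab
      nlinarith [mul_nonneg (sub_nonneg.2 hβ) (sub_pos.2 hCH).le]
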